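/- Let S ≥ 1, c > 0, and let ω̂ = (ω̂_1,...,ω̂_S) be a probability vector. If ω = (ω_1,...,ω_S) follows the Dirichlet distribution with parameter α̂_s = 1 + c ω̂_s, s = 1,...,S, then for any nonnegative integers n_1,...,n_S with n_1 + ··· + n_S = n, E(ω_1^{n_1} ··· ω_S^{n_S}) ≥ [Γ(c + S) c^n / Γ(c + S + n)] · ω̂_1^{n_1} ··· ω̂_S^{n_S}. -/

import Mathlib

open MeasureTheory Set

/-- The simplex `Δ(S)` of probability vectors in `ℝ^S`. -/
def simplexSet (S : ℕ) : Set (Fin S → ℝ) :=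
  {ω | (∀ s, 0 ≤ ω s) ∧ ∑ s, ω s = 1}

/-- Lebesgue measure on the simplex `Δ(S)` (via the first `S-1` coordinates). -/
noncomputable def simplexMeasure : (S : ℕ) → Measure (Fin S → ℝ)
  | 0 => 0
  | m + 1 =>
      Measure.map (fun y : Fin m → ℝ => Fin.snoc y (1 - ∑ i, y i))
        (volume.restrict {y : Fin m → ℝ | (∀ i, 0 ≤ y i) ∧ ∑ i, y i ≤ 1})

/-- The Dirichlet distribution on `Δ(S)` with parameter `α`, defined via its density
`Γ(Σ α_s)/Π Γ(α_s) · Π ω_s^{α_s - 1}` with respect to Lebesgue measure on the simplex. -/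
noncomputable def dirichletMeasure (S : ℕ) (α : Fin S → ℝ) : Measure (Fin S → ℝ) :=
  (simplexMeasure S).withDensity fun ω =>
    ENNReal.ofReal ((Real.Gamma (∑ s, α s) / ∏ s, Real.Gamma (α s)) * ∏ s, ω s ^ (α s - 1))


section DirichletAux
open Real
open scoped ENNReal

lemma real_beta {u v : ℝ} (hu : 0 < u) (hv : 0 < v) :
    ∫ x in (0:ℝ)..1, x ^ (u-1) * (1-x) ^ (v-1) = Gamma u * Gamma v / Gamma (u+v) := by
  have h := Complex.Gamma_mul_Gamma_eq_betaIntegral (s := (u:ℂ)) (t := (v:ℂ))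
    (by simpa using hu) (by simpa using hv)
  have hB : Complex.betaIntegral (u:ℂ) (v:ℂ)
      = ((∫ x in (0:ℝ)..1, x ^ (u-1) * (1-x) ^ (v-1) : ℝ) : ℂ) := by
    rw [Complex.betaIntegral, ← intervalIntegral.integral_ofReal]
    refine intervalIntegral.integral_congr fun x hx => ?_
    rw [uIcc_of_le zero_le_one] at hx
    rw [show ((u:ℂ)-1) = ((u-1:ℝ):ℂ) by push_cast; ring,
        show ((v:ℂ)-1) = ((v-1:ℝ):ℂ) by push_cast; ring,
        show ((1:ℂ) - (x:ℂ)) = ((1-x:ℝ):ℂ) by push_cast; ring,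
        ← Complex.ofReal_cpow hx.1, ← Complex.ofReal_cpow (by linarith [hx.2]),
        ← Complex.ofReal_mul]
  rw [hB, ← Complex.ofReal_add, Complex.Gamma_ofReal, Complex.Gamma_ofReal,
    Complex.Gamma_ofReal, ← Complex.ofReal_mul, ← Complex.ofReal_mul] at h
  have heq := Complex.ofReal_injective h
  have hpos : 0 < Gamma (u+v) := Gamma_pos_of_pos (by linarith)
  field_simp
  linarith [heq]

lemma lintegral_beta {u v r : ℝ} (hu : 0 ≤ u) (hv : 0 ≤ v) (hr : 0 ≤ r) :
    ∫⁻ x in Ioc 0 r, ENNReal.ofReal (x ^ u * (r - x) ^ v)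
      = ENNReal.ofReal (r ^ (u+v+1) * (Gamma (u+1) * Gamma (v+1) / Gamma (u+v+2))) := by
  rcases eq_or_lt_of_le hr with rfl | hr
  · simp [Real.zero_rpow (by positivity : u+v+1 ≠ 0)]
  have hcont : Continuous fun x : ℝ => x ^ u * (r - x) ^ v :=
    (continuous_id.rpow_const (fun x => Or.inr hu)).mul
      ((continuous_const.sub continuous_id).rpow_const (fun x => Or.inr hv))
  have hint : ∫ x in (0:ℝ)..r, x ^ u * (r-x) ^ v
      = r ^ (u+v+1) * (Gamma (u+1) * Gamma (v+1) / Gamma (u+v+2)) := by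
    have h1 : r • ∫ t in (0:ℝ)..1, (r*t) ^ u * (r - r*t) ^ v
        = ∫ x in (0:ℝ)..r, x ^ u * (r-x) ^ v := by
      simpa using intervalIntegral.smul_integral_comp_mul_left
        (fun x => x ^ u * (r - x) ^ v) r (a := 0) (b := 1)
    have h2 : ∫ t in (0:ℝ)..1, (r*t) ^ u * (r - r*t) ^ v
        = (r ^ u * r ^ v) * ∫ t in (0:ℝ)..1, t ^ u * (1-t) ^ v := by
      rw [← intervalIntegral.integral_const_mul]
      refine intervalIntegral.integral_congr fun t ht => ?_
      rw [uIcc_of_le zero_le_one] at ht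
      rw [show r - r*t = r * (1-t) by ring, mul_rpow hr.le ht.1,
        mul_rpow hr.le (by linarith [ht.2])]
      ring
    have h3 : ∫ t in (0:ℝ)..1, t ^ u * (1-t) ^ v
        = Gamma (u+1) * Gamma (v+1) / Gamma (u+v+2) := by
      have := real_beta (by linarith : (0:ℝ) < u+1) (by linarith : (0:ℝ) < v+1)
      simp only [add_sub_cancel_right] at this
      rw [this]; ring_nf
    rw [← h1, h2, h3, smul_eq_mul, show u+v+1 = u+(v+1) by ring, rpow_add hr,
      rpow_add hr, rpow_one]
    ring
  rw [← hint, intervalIntegral.integral_of_le hr.le,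
    ofReal_integral_eq_lintegral_ofReal hcont.integrableOn_Ioc]
  refine (ae_restrict_iff' measurableSet_Ioc).2 (ae_of_all _ fun x hx => ?_)
  exact mul_nonneg (rpow_nonneg hx.1.le u) (rpow_nonneg (by linarith [hx.2]) v)

def T (m : ℕ) : Set (Fin m → ℝ) := {y | (∀ i, 0 ≤ y i) ∧ ∑ i, y i ≤ 1}

lemma measurableSet_T (m : ℕ) : MeasurableSet (T m) := by
  have : T m = (⋂ i, {y : Fin m → ℝ | 0 ≤ y i}) ∩ {y | ∑ i, y i ≤ 1} := by
    ext y; simp [T, forall_and]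
  rw [this]
  exact (MeasurableSet.iInter fun i =>
      measurableSet_le measurable_const (measurable_pi_apply i)).inter
    (measurableSet_le (by fun_prop) measurable_const)

lemma measurable_F {m : ℕ} (b : Fin (m+1) → ℝ) :
    Measurable fun y : Fin m → ℝ =>
      ENNReal.ofReal (∏ i, (Fin.snoc (α := fun _ => ℝ) y (1 - ∑ j, y j) i) ^ b i) := by
  refine ENNReal.measurable_ofReal.comp (Finset.measurable_prod _ fun i _ => ?_)
  induction i using Fin.lastCases with
  | last => simp only [Fin.snoc_last]; fun_prop
  | cast j => simp only [Fin.snoc_castSucc]; fun_prop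

lemma key : ∀ (m : ℕ) (b : Fin (m+1) → ℝ), (∀ i, 0 ≤ b i) →
    ∫⁻ y in T m, ENNReal.ofReal (∏ i, (Fin.snoc (α := fun _ => ℝ) y (1 - ∑ j, y j) i) ^ b i)
      = ENNReal.ofReal ((∏ i, Gamma (b i + 1)) / Gamma (∑ i, (b i + 1))) := by
  intro m
  induction m with
  | zero =>
    intro b hb
    have hT : T 0 = univ := by ext y; simp [T]
    have h1 : ∀ y : Fin 0 → ℝ, (∏ i, (Fin.snoc (α := fun _ => ℝ) y (1 - ∑ j, y j) i) ^ b i) = 1 := by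
      intro y
      rw [Fin.prod_univ_one]
      have h0 : (0 : Fin 1) = Fin.last 0 := rfl
      rw [h0, Fin.snoc_last]
      simp
    simp only [h1, hT, Measure.restrict_univ]
    rw [Fin.sum_univ_one, Fin.prod_univ_one,
      div_self (Gamma_pos_of_pos (by linarith [hb 0])).ne']
    simp [MeasureTheory.volume_pi, Measure.pi_univ]
  | succ m IH =>
    intro b hb
    have hu : 0 ≤ b ((Fin.last m).castSucc) := hb _
    have hv : 0 ≤ b (Fin.last (m+1)) := hb _
    set B : ℝ := Gamma (b ((Fin.last m).castSucc) + 1) * Gamma (b (Fin.last (m+1)) + 1) /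
      Gamma (b ((Fin.last m).castSucc) + b (Fin.last (m+1)) + 2) with hB_def
    have hBpos : 0 < B := div_pos
      (mul_pos (Gamma_pos_of_pos (by linarith)) (Gamma_pos_of_pos (by linarith)))
      (Gamma_pos_of_pos (by linarith))
    set F : (Fin (m+1) → ℝ) → ℝ≥0∞ := fun y =>
      ENNReal.ofReal (∏ i, (Fin.snoc (α := fun _ => ℝ) y (1 - ∑ j, y j) i) ^ b i) with hF_def
    have hF : Measurable F := measurable_F b
    set e := MeasurableEquiv.piFinSuccAbove (fun _ : Fin (m+1) => ℝ) (Fin.last m) with he_def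
    have hesymm : ∀ p : ℝ × (Fin m → ℝ), e.symm p = Fin.snoc p.2 p.1 := by
      intro p
      simp [he_def, MeasurableEquiv.piFinSuccAbove, Fin.insertNthEquiv]
    have hMP := (measurePreserving_piFinSuccAbove
      (fun _ : Fin (m+1) => (volume : Measure ℝ)) (Fin.last m)).symm
    have hGmeas : Measurable ((T (m+1)).indicator F) :=
      hF.indicator (measurableSet_T _)
    have stepB : ∫⁻ y in T (m+1), F y
        = ∫⁻ p, ((T (m+1)).indicator F) (Fin.snoc p.2 p.1)
            ∂((volume : Measure ℝ).prod (volume : Measure (Fin m → ℝ))) := by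
      rw [← lintegral_indicator (measurableSet_T _)]
      rw [MeasureTheory.volume_pi]
      rw [← hMP.lintegral_comp hGmeas]
      refine lintegral_congr fun p => by rw [hesymm]
    have hsnocmeas : Measurable fun p : ℝ × (Fin m → ℝ) => (Fin.snoc p.2 p.1 : Fin (m+1) → ℝ) := by
      refine measurable_pi_iff.2 fun i => ?_
      induction i using Fin.lastCases with
      | last => simp only [Fin.snoc_last]; fun_prop
      | cast j => simp only [Fin.snoc_castSucc]; fun_prop
    have stepC : ∫⁻ p, ((T (m+1)).indicator F) (Fin.snoc p.2 p.1)
            ∂((volume : Measure ℝ).prod (volume : Measure (Fin m → ℝ)))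
        = ∫⁻ z, ∫⁻ x, ((T (m+1)).indicator F) (Fin.snoc z x) ∂volume
            ∂(volume : Measure (Fin m → ℝ)) :=
      lintegral_prod_symm _ (hGmeas.comp hsnocmeas).aemeasurable
    -- the inner integral
    have claim : ∀ z : Fin m → ℝ,
        ∫⁻ x, ((T (m+1)).indicator F) (Fin.snoc z x) ∂volume
          = (T m).indicator (fun z => ENNReal.ofReal
              ((∏ j, z j ^ b (Fin.castSucc (Fin.castSucc j))) *
                ((1 - ∑ j, z j) ^
                    (b ((Fin.last m).castSucc) + b (Fin.last (m+1)) + 1) * B))) z := by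
      intro z
      have hsum : ∀ x : ℝ, ∑ i, (Fin.snoc (α := fun _ => ℝ) z x) i = (∑ j, z j) + x := by
        intro x; rw [Fin.sum_univ_castSucc]; simp
      by_cases hz : z ∈ T m
      · have hzr : (0:ℝ) ≤ 1 - ∑ j, z j := by
          have := hz.2; linarith
        have hP : (0:ℝ) ≤ ∏ j, z j ^ b (Fin.castSucc (Fin.castSucc j)) :=
          Finset.prod_nonneg fun j _ => rpow_nonneg (hz.1 j) _
        have hset : ∀ x : ℝ, (Fin.snoc (α := fun _ => ℝ) z x ∈ T (m+1))
            ↔ x ∈ Icc (0:ℝ) (1 - ∑ j, z j) := by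
          intro x
          constructor
          · intro h
            have h0 := h.1 (Fin.last m)
            rw [Fin.snoc_last] at h0
            have h2 := h.2
            rw [hsum] at h2
            exact ⟨h0, by linarith⟩
          · rintro ⟨hx0, hx1⟩
            refine ⟨fun i => ?_, by rw [hsum]; linarith⟩
            induction i using Fin.lastCases with
            | last => rw [Fin.snoc_last]; exact hx0
            | cast j => rw [Fin.snoc_castSucc]; exact hz.1 j
        have halg : ∀ x ∈ Ioc (0:ℝ) (1 - ∑ j, z j), F (Fin.snoc z x)
            = ENNReal.ofReal ((∏ j, z j ^ b (Fin.castSucc (Fin.castSucc j))) *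
                (x ^ b ((Fin.last m).castSucc) *
                  ((1 - ∑ j, z j) - x) ^ b (Fin.last (m+1)))) := by
          intro x hx
          simp only [hF_def]
          congr 1
          rw [hsum]
          rw [Fin.prod_univ_castSucc]
          simp only [Fin.snoc_castSucc, Fin.snoc_last]
          rw [Fin.prod_univ_castSucc]
          simp only [Fin.snoc_castSucc, Fin.snoc_last]
          rw [show (1 - ((∑ j, z j) + x)) = (1 - ∑ j, z j) - x by ring]
          ring
        calc ∫⁻ x, ((T (m+1)).indicator F) (Fin.snoc z x) ∂volume
            = ∫⁻ x, (Icc (0:ℝ) (1 - ∑ j, z j)).indicator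
                (fun x => F (Fin.snoc z x)) x ∂volume := by
              refine lintegral_congr fun x => ?_
              by_cases hmem : x ∈ Icc (0:ℝ) (1 - ∑ j, z j)
              · rw [indicator_of_mem ((hset x).2 hmem), indicator_of_mem hmem]
              · rw [indicator_of_notMem (fun h => hmem ((hset x).1 h)),
                  indicator_of_notMem hmem]
          _ = ∫⁻ x in Icc (0:ℝ) (1 - ∑ j, z j), F (Fin.snoc z x) ∂volume :=
              lintegral_indicator measurableSet_Icc _
          _ = ∫⁻ x in Ioc (0:ℝ) (1 - ∑ j, z j), F (Fin.snoc z x) ∂volume := by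
              rw [Measure.restrict_congr_set Ioc_ae_eq_Icc]
          _ = ∫⁻ x in Ioc (0:ℝ) (1 - ∑ j, z j),
                ENNReal.ofReal (∏ j, z j ^ b (Fin.castSucc (Fin.castSucc j))) *
                ENNReal.ofReal (x ^ b ((Fin.last m).castSucc) *
                  ((1 - ∑ j, z j) - x) ^ b (Fin.last (m+1))) ∂volume := by
              refine setLIntegral_congr_fun measurableSet_Ioc (fun x hx => ?_)
              rw [halg x hx, ENNReal.ofReal_mul hP]
          _ = ENNReal.ofReal (∏ j, z j ^ b (Fin.castSucc (Fin.castSucc j))) *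
              ∫⁻ x in Ioc (0:ℝ) (1 - ∑ j, z j),
                ENNReal.ofReal (x ^ b ((Fin.last m).castSucc) *
                  ((1 - ∑ j, z j) - x) ^ b (Fin.last (m+1))) ∂volume :=
              lintegral_const_mul _ (by fun_prop)
          _ = ENNReal.ofReal (∏ j, z j ^ b (Fin.castSucc (Fin.castSucc j))) *
              ENNReal.ofReal ((1 - ∑ j, z j) ^
                  (b ((Fin.last m).castSucc) + b (Fin.last (m+1)) + 1) * B) := by
              rw [lintegral_beta hu hv hzr]
          _ = _ := by
              rw [indicator_of_mem hz, ← ENNReal.ofReal_mul hP]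
      · have hnot : ∀ x : ℝ, Fin.snoc (α := fun _ => ℝ) z x ∉ T (m+1) := by
          intro x hmem
          refine hz ⟨fun j => ?_, ?_⟩
          · have := hmem.1 j.castSucc
            rwa [Fin.snoc_castSucc] at this
          · have h2 := hmem.2
            rw [hsum] at h2
            have h0 := hmem.1 (Fin.last m)
            rw [Fin.snoc_last] at h0
            show (∑ j, z j) ≤ 1
            linarith
        simp only [indicator_of_notMem (hnot _), indicator_of_notMem hz, lintegral_zero]
    -- outer integral via IH
    have hb' : ∀ i, 0 ≤ (Fin.snoc (α := fun _ => ℝ) (fun j => b (Fin.castSucc (Fin.castSucc j)))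
        (b ((Fin.last m).castSucc) + b (Fin.last (m+1)) + 1)) i := by
      intro i
      induction i using Fin.lastCases with
      | last => rw [Fin.snoc_last]; linarith
      | cast j => rw [Fin.snoc_castSucc]; exact hb _
    have stepE : ∫⁻ z, (T m).indicator (fun z => ENNReal.ofReal
              ((∏ j, z j ^ b (Fin.castSucc (Fin.castSucc j))) *
                ((1 - ∑ j, z j) ^
                    (b ((Fin.last m).castSucc) + b (Fin.last (m+1)) + 1) * B))) z
            ∂(volume : Measure (Fin m → ℝ))
        = ENNReal.ofReal B *
          ∫⁻ z in T m, ENNReal.ofReal (∏ i,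
            (Fin.snoc (α := fun _ => ℝ) z (1 - ∑ j, z j) i) ^
              (Fin.snoc (α := fun _ => ℝ) (fun j => b (Fin.castSucc (Fin.castSucc j)))
                (b ((Fin.last m).castSucc) + b (Fin.last (m+1)) + 1)) i) ∂volume := by
      rw [lintegral_indicator (measurableSet_T m)]
      rw [← lintegral_const_mul _ (by
        have := measurable_F (Fin.snoc (α := fun _ => ℝ)
          (fun j => b (Fin.castSucc (Fin.castSucc j)))
          (b ((Fin.last m).castSucc) + b (Fin.last (m+1)) + 1))
        exact this)]
      refine setLIntegral_congr_fun (measurableSet_T m) (fun z hz => ?_)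
      have hzr : (0:ℝ) ≤ 1 - ∑ j, z j := by
        have := hz.2; linarith
      have hP : (0:ℝ) ≤ ∏ j, z j ^ b (Fin.castSucc (Fin.castSucc j)) :=
        Finset.prod_nonneg fun j _ => rpow_nonneg (hz.1 j) _
      rw [Fin.prod_univ_castSucc]
      simp only [Fin.snoc_castSucc, Fin.snoc_last]
      rw [← ENNReal.ofReal_mul hBpos.le]
      congr 1
      ring
    rw [hF_def] at stepB
    rw [stepB, stepC]
    simp only [claim]
    rw [stepE, IH _ hb']
    -- final Gamma algebra
    rw [← ENNReal.ofReal_mul hBpos.le]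
    congr 1
    have hsumEq : ∑ i : Fin (m+1),
        ((Fin.snoc (α := fun _ => ℝ) (fun j => b (Fin.castSucc (Fin.castSucc j)))
          (b ((Fin.last m).castSucc) + b (Fin.last (m+1)) + 1)) i + 1)
        = ∑ i : Fin (m+2), (b i + 1) := by
      rw [Fin.sum_univ_castSucc, Fin.sum_univ_castSucc (n := m+1), Fin.sum_univ_castSucc (n := m)]
      simp only [Fin.snoc_castSucc, Fin.snoc_last]
      ring
    have hprodEq : ∏ i : Fin (m+1),
        Gamma ((Fin.snoc (α := fun _ => ℝ) (fun j => b (Fin.castSucc (Fin.castSucc j)))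
          (b ((Fin.last m).castSucc) + b (Fin.last (m+1)) + 1)) i + 1)
        = (∏ j : Fin m, Gamma (b (Fin.castSucc (Fin.castSucc j)) + 1)) *
          Gamma (b ((Fin.last m).castSucc) + b (Fin.last (m+1)) + 2) := by
      rw [Fin.prod_univ_castSucc]
      simp only [Fin.snoc_castSucc, Fin.snoc_last]
      rw [show b (Fin.last m).castSucc + b (Fin.last (m+1)) + 1 + 1
          = b (Fin.last m).castSucc + b (Fin.last (m+1)) + 2 by ring]
    have hprodEq2 : ∏ i : Fin (m+2), Gamma (b i + 1)
        = (∏ j : Fin m, Gamma (b (Fin.castSucc (Fin.castSucc j)) + 1)) *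
          Gamma (b ((Fin.last m).castSucc) + 1) * Gamma (b (Fin.last (m+1)) + 1) := by
      rw [Fin.prod_univ_castSucc, Fin.prod_univ_castSucc]
    have hne : Gamma (b ((Fin.last m).castSucc) + b (Fin.last (m+1)) + 2) ≠ 0 :=
      (Gamma_pos_of_pos (by linarith)).ne'
    rw [hsumEq, hprodEq, hprodEq2, hB_def]
    have halg2 : ∀ (p g1 g2 G A : ℝ), G ≠ 0 → (g1 * g2 / G) * (p * G / A) = p * g1 * g2 / A := by
      intro p g1 g2 G A hG
      rw [div_mul_div_comm, show g1*g2*(p*G) = (p*g1*g2)*G by ring, mul_comm G A,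
        mul_div_mul_right _ _ hG]
    exact halg2 _ _ _ _ _ hne

lemma gamma_fact : ∀ (kn : ℕ) (a : ℝ), 0 ≤ a → Gamma (a + 1) * a ^ kn ≤ Gamma (a + kn + 1) := by
  intro kn
  induction kn with
  | zero => intro a ha; simp
  | succ p ih =>
    intro a ha
    have hpos : (0:ℝ) < Gamma (a + p + 1) := Gamma_pos_of_pos (by positivity)
    have h1 : Gamma (a + (p+1:ℕ) + 1) = (a + p + 1) * Gamma (a + p + 1) := by
      rw [show a + ((p+1:ℕ):ℝ) + 1 = (a + (p:ℕ) + 1) + 1 by push_cast; ring,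
        Gamma_add_one (by positivity)]
    calc Gamma (a+1) * a^(p+1) = (Gamma (a+1) * a^p) * a := by ring
      _ ≤ Gamma (a + p + 1) * a := mul_le_mul_of_nonneg_right (ih a ha) ha
      _ ≤ (a + p + 1) * Gamma (a + p + 1) := by nlinarith [hpos, ha]
      _ = Gamma (a + (p+1:ℕ) + 1) := h1.symm


/-- **Dirichlet moment lower bound.**  If `ω ~ Dir_S(1 + c ω̂)` with `ω̂` a probability
vector, then for nonnegative integers `n_1, …, n_S` with `n = Σ_s n_s`,
`E(ω₁^{n₁} ⋯ ω_S^{n_S}) ≥ [Γ(c + S) cⁿ / Γ(c + S + n)] ω̂₁^{n₁} ⋯ ω̂_S^{n_S}`. -/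
theorem dirichlet_moment_lower_bound
    (S : ℕ) (hS : 1 ≤ S) (c : ℝ) (hc : 0 < c)
    (ωhat : Fin S → ℝ) (hωhat : ωhat ∈ simplexSet S)
    (k : Fin S → ℕ) (n : ℕ) (hn : n = ∑ s, k s) :
    ENNReal.ofReal
        ((Real.Gamma (c + S) * c ^ n / Real.Gamma (c + S + n)) * ∏ s, ωhat s ^ k s) ≤
      ∫⁻ ω, ENNReal.ofReal (∏ s, ω s ^ k s)
        ∂(dirichletMeasure S fun s => 1 + c * ωhat s) := by
  obtain ⟨m, rfl⟩ : ∃ m, S = m + 1 := ⟨S - 1, (Nat.succ_pred_eq_of_pos hS).symm⟩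
  have hω0 : ∀ s, 0 ≤ ωhat s := hωhat.1
  have hω1 : ∑ s, ωhat s = 1 := hωhat.2
  set b : Fin (m+1) → ℝ := fun s => c * ωhat s + (k s : ℝ) with hb_def
  have hb : ∀ s, 0 ≤ b s := fun s => add_nonneg (mul_nonneg hc.le (hω0 s)) (Nat.cast_nonneg _)
  -- the density and integrand are measurable
  have hdens : Measurable fun ω : Fin (m+1) → ℝ =>
      ENNReal.ofReal ((Real.Gamma (∑ s, (1 + c * ωhat s)) /
        ∏ s, Real.Gamma (1 + c * ωhat s)) * ∏ s, ω s ^ (1 + c * ωhat s - 1)) := by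
    refine ENNReal.measurable_ofReal.comp
      (measurable_const.mul (Finset.measurable_prod _ fun s _ => ?_))
    fun_prop
  have hg : Measurable fun ω : Fin (m+1) → ℝ => ENNReal.ofReal (∏ s, ω s ^ k s) := by
    refine ENNReal.measurable_ofReal.comp (Finset.measurable_prod _ fun s _ => ?_)
    fun_prop
  have hφ : Measurable fun y : Fin m → ℝ => (Fin.snoc y (1 - ∑ i, y i) : Fin (m+1) → ℝ) := by
    refine measurable_pi_iff.2 fun i => ?_
    induction i using Fin.lastCases with
    | last => simp only [Fin.snoc_last]; fun_prop
    | cast j => simp only [Fin.snoc_castSucc]; fun_prop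
  rw [dirichletMeasure, lintegral_withDensity_eq_lintegral_mul _ hdens hg]
  rw [simplexMeasure, lintegral_map (by exact hdens.mul hg) hφ]
  have hTset : {y : Fin m → ℝ | (∀ i, 0 ≤ y i) ∧ ∑ i, y i ≤ 1} = T m := rfl
  rw [hTset]
  -- positivity facts
  have hα : ∀ s : Fin (m+1), (0:ℝ) < 1 + c * ωhat s := fun s => by
    have := hω0 s; nlinarith
  have hsumα : ∑ s : Fin (m+1), (1 + c * ωhat s) = c + ((m+1 : ℕ) : ℝ) := by
    rw [Finset.sum_add_distrib, ← Finset.mul_sum, hω1]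
    simp
    ring
  have hC : (0:ℝ) < Real.Gamma (∑ s, (1 + c * ωhat s)) / ∏ s, Real.Gamma (1 + c * ωhat s) := by
    apply div_pos
    · apply Gamma_pos_of_pos; rw [hsumα]; positivity
    · exact Finset.prod_pos fun s _ => Gamma_pos_of_pos (hα s)
  -- pointwise rewrite on T m
  have hpt : ∫⁻ y in T m,
        ((fun ω : Fin (m+1) → ℝ => ENNReal.ofReal ((Real.Gamma (∑ s, (1 + c * ωhat s)) /
            ∏ s, Real.Gamma (1 + c * ωhat s)) * ∏ s, ω s ^ (1 + c * ωhat s - 1))) *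
          (fun ω : Fin (m+1) → ℝ => ENNReal.ofReal (∏ s, ω s ^ k s))) (Fin.snoc y (1 - ∑ i, y i))
      = ∫⁻ y in T m, ENNReal.ofReal (Real.Gamma (∑ s, (1 + c * ωhat s)) /
            ∏ s, Real.Gamma (1 + c * ωhat s)) *
          ENNReal.ofReal (∏ i, (Fin.snoc (α := fun _ => ℝ) y (1 - ∑ j, y j) i) ^ b i) := by
    refine setLIntegral_congr_fun (measurableSet_T m) (fun y hy => ?_)
    have hynn : ∀ i : Fin (m+1), 0 ≤ (Fin.snoc (α := fun _ => ℝ) y (1 - ∑ j, y j)) i := by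
      intro i
      induction i using Fin.lastCases with
      | last =>
        rw [Fin.snoc_last]
        have := hy.2; linarith
      | cast j => rw [Fin.snoc_castSucc]; exact hy.1 j
    simp only [Pi.mul_apply]
    rw [ENNReal.ofReal_mul hC.le, mul_assoc]
    congr 1
    rw [← ENNReal.ofReal_mul (Finset.prod_nonneg fun s _ => rpow_nonneg (hynn s) _),
      ← Finset.prod_mul_distrib]
    congr 1
    refine Finset.prod_congr rfl fun s _ => ?_
    simp only [hb_def]
    rw [show (1 + c * ωhat s - 1) = c * ωhat s by ring,
      ← Real.rpow_natCast (Fin.snoc (α := fun _ => ℝ) y (1 - ∑ j, y j) s) (k s),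
      ← Real.rpow_add_of_nonneg (hynn s) (mul_nonneg hc.le (hω0 s)) (Nat.cast_nonneg _)]
  rw [hpt, lintegral_const_mul _ (measurable_F b), key m b hb]
  -- final inequality
  rw [← ENNReal.ofReal_mul hC.le]
  apply ENNReal.ofReal_le_ofReal
  have hsumb : ∑ s : Fin (m+1), (b s + 1) = c + ((m+1 : ℕ) : ℝ) + (n : ℝ) := by
    have hnc : (n : ℝ) = ∑ s : Fin (m+1), (k s : ℝ) := by
      rw [hn]; push_cast; ring
    rw [hb_def]
    simp only
    rw [Finset.sum_add_distrib, Finset.sum_add_distrib, ← Finset.mul_sum, hω1, ← hnc]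
    simp
    ring
  rw [hsumα, hsumb]
  set G : ℝ := Real.Gamma (c + ((m+1 : ℕ) : ℝ)) with hG_def
  set D : ℝ := Real.Gamma (c + ((m+1 : ℕ) : ℝ) + (n:ℝ)) with hD_def
  have hGpos : 0 < G := Gamma_pos_of_pos (by positivity)
  have hDpos : 0 < D := Gamma_pos_of_pos (by positivity)
  have hPs : ∀ s : Fin (m+1), (0:ℝ) < Real.Gamma (1 + c * ωhat s) :=
    fun s => Gamma_pos_of_pos (hα s)
  have hcn : c ^ n = ∏ s : Fin (m+1), c ^ k s := by
    rw [hn, ← Finset.prod_pow_eq_pow_sum]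
  calc G * c ^ n / D * ∏ s, ωhat s ^ k s
      = G / D * ∏ s, (c ^ k s * ωhat s ^ k s) := by
        rw [Finset.prod_mul_distrib, ← hcn]; ring
    _ ≤ G / D * ∏ s, (Real.Gamma (b s + 1) / Real.Gamma (1 + c * ωhat s)) := by
        refine mul_le_mul_of_nonneg_left (Finset.prod_le_prod
          (fun s _ => mul_nonneg (pow_nonneg hc.le _) (pow_nonneg (hω0 s) _))
          fun s _ => ?_) (div_nonneg hGpos.le hDpos.le)
        rw [le_div_iff₀ (hPs s), ← mul_pow]
        calc (c * ωhat s) ^ k s * Real.Gamma (1 + c * ωhat s)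
            = Real.Gamma (c * ωhat s + 1) * (c * ωhat s) ^ k s := by
              rw [show (1 + c * ωhat s) = c * ωhat s + 1 by ring]; ring
          _ ≤ Real.Gamma (c * ωhat s + (k s : ℝ) + 1) :=
              gamma_fact (k s) _ (mul_nonneg hc.le (hω0 s))
          _ = Real.Gamma (b s + 1) := by simp only [hb_def]
    _ = (G / ∏ s, Real.Gamma (1 + c * ωhat s)) * ((∏ s, Real.Gamma (b s + 1)) / D) := by
        rw [Finset.prod_div_distrib, div_mul_div_comm, div_mul_div_comm,
          mul_comm D]

end DirichletAux
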